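/- Inclusion of the Hölder dome in the GAP dome (Theorem 2, first part): for every x ∈ ℝ^n and every u ∈ Δ, D_new(x,u) ⊆ D_gap(x,u). Explicitly, with c = (1/2)(y + u) and r = (1/2)‖y − u‖₂: every u' ∈ ℝ^m satisfying ‖u' − c‖₂ ≤ r and ⟨A x, u'⟩ ≤ λ‖x‖₁ also satisfies ⟨y − c, u'⟩ ≤ ⟨y − c, c⟩ + gap(x,u) − r². -/
import Mathlib


/-- Euclidean norm of a vector in ℝ^m. -/
noncomputable def norm2 {m : ℕ} (v : Fin m → ℝ) : ℝ := Real.sqrt (∑ i, v i ^ 2)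

/-- ℓ1 norm of a vector in ℝ^n. -/
def norm1 {n : ℕ} (x : Fin n → ℝ) : ℝ := ∑ i, |x i|

/-- Canonical inner product on ℝ^m. -/
def dot {m : ℕ} (a u : Fin m → ℝ) : ℝ := ∑ i, a i * u i

/-- Lasso primal objective P(x) = (1/2)‖y − Ax‖₂² + λ‖x‖₁. -/
noncomputable def Pobj {m n : ℕ} (A : Matrix (Fin m) (Fin n) ℝ) (y : Fin m → ℝ)
    (lam : ℝ) (x : Fin n → ℝ) : ℝ :=
  (1 / 2) * norm2 (y - A.mulVec x) ^ 2 + lam * norm1 x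

/-- Lasso dual objective D(u) = (1/2)‖y‖₂² − (1/2)‖y − u‖₂². -/
noncomputable def Dobj {m : ℕ} (y u : Fin m → ℝ) : ℝ :=
  (1 / 2) * norm2 y ^ 2 - (1 / 2) * norm2 (y - u) ^ 2

/-- Dual feasibility: u ∈ Δ iff |⟨a_i, u⟩| ≤ λ for every column a_i of A. -/
def feas {m n : ℕ} (A : Matrix (Fin m) (Fin n) ℝ) (lam : ℝ) (u : Fin m → ℝ) : Prop :=
  ∀ i : Fin n, |dot (fun j => A j i) u| ≤ lam

/-- Theorem 2, first part: inclusion of the Hölder dome in the GAP dome: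
with c = (1/2)(y + u) and r = (1/2)‖y − u‖₂, any u' with ‖u' − c‖₂ ≤ r and
⟨A x, u'⟩ ≤ λ‖x‖₁ satisfies ⟨y − c, u'⟩ ≤ ⟨y − c, c⟩ + gap(x,u) − r². -/
theorem holder_dome_subset_gap_dome (m n : ℕ) (hm : 0 < m) (hn : 0 < n)
    (A : Matrix (Fin m) (Fin n) ℝ) (y : Fin m → ℝ) (lam : ℝ) (hlam : 0 < lam)
    (x : Fin n → ℝ) (u : Fin m → ℝ) (hu : feas A lam u)
    (c : Fin m → ℝ) (hc : c = fun i => (y i + u i) / 2)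
    (r : ℝ) (hr : r = (1 / 2) * norm2 (y - u)) :
    ∀ u' : Fin m → ℝ, norm2 (u' - c) ≤ r → dot (A.mulVec x) u' ≤ lam * norm1 x →
      dot (y - c) u' ≤ dot (y - c) c + (Pobj A y lam x - Dobj y u) - r ^ 2 := by
  intro u' h1 h2
  set b := A.mulVec x with hb
  have hS : ∀ v : Fin m → ℝ, norm2 v ^ 2 = ∑ i, v i ^ 2 := fun v =>
    Real.sq_sqrt (Finset.sum_nonneg fun i _ => sq_nonneg _)
  have hn2 : (0:ℝ) ≤ norm2 (u' - c) := Real.sqrt_nonneg _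
  have h1' : ∑ i, (u' i - c i) ^ 2 ≤ (1/4) * ∑ i, (y i - u i) ^ 2 := by
    have := mul_self_le_mul_self hn2 h1
    rw [← pow_two, ← pow_two, hS, hr, mul_pow, hS] at this
    simp only [Pi.sub_apply] at this
    linarith
  have h3 : (0:ℝ) ≤ ∑ i, (b i + u' i - y i) ^ 2 :=
    Finset.sum_nonneg fun i _ => sq_nonneg _
  have key : ∑ i, ((y i - c i) * u' i - (y i - c i) * c i - (1/2) * (y i - b i) ^ 2
        - b i * u' i + (1/2) * (y i) ^ 2 - (1/4) * (y i - u i) ^ 2)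
      = ∑ i, ((1/2) * (u' i - c i) ^ 2 - (1/8) * (y i - u i) ^ 2
        - (1/2) * (b i + u' i - y i) ^ 2) :=
    Finset.sum_congr rfl fun i _ => by subst hc; ring
  simp only [Finset.sum_sub_distrib, Finset.sum_add_distrib, ← Finset.mul_sum] at key
  have hdot1 : dot (y - c) u' = ∑ i, (y i - c i) * u' i := by
    simp [dot, Pi.sub_apply]
  have hdot2 : dot (y - c) c = ∑ i, (y i - c i) * c i := by
    simp [dot, Pi.sub_apply]
  have hdot3 : dot b u' = ∑ i, b i * u' i := rfl
  have hP : Pobj A y lam x = (1/2) * (∑ i, (y i - b i) ^ 2) + lam * norm1 x := by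
    rw [Pobj, hS]; simp [Pi.sub_apply, hb]
  have hD : Dobj y u = (1/2) * (∑ i, (y i) ^ 2) - (1/2) * (∑ i, (y i - u i) ^ 2) := by
    rw [Dobj, hS, hS]; simp [Pi.sub_apply]
  have hr2 : r ^ 2 = (1/4) * ∑ i, (y i - u i) ^ 2 := by
    rw [hr, mul_pow, hS]; simp only [Pi.sub_apply]; ring
  rw [hdot1, hdot2, hP, hD, hr2]
  linarith [key, h1', h2, h3]
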